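/- Let V be a finite nonempty set, let p and π be probability distributions on V, and let x* be a point attaining the maximum of p. Set q := 1 - p(x*) = 1 - max_{x∈V} p(x). Then for every subset A ⊆ V, one has π(A) - p(A) ≤ sup{ λ ∈ [0,1] : d_kl(λ ‖ q) ≤ D_KL(π ‖ p) }, where the supremum is over all λ in [0,1] satisfying the stated inequality (the set is nonempty since it contains q). -/

import Mathlib

open Real

/-- Termwise KL contribution `p·log(p/q)` with the conventions
`0·log(0/q) = 0`, `0·log(0/0) = 0`, and `b·log(b/0) = +∞` for `b > 0`,
valued in the extended reals `[-∞, ∞]`. -/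
noncomputable def klTerm (p q : ℝ) : EReal :=
  if p = 0 then 0 else if q = 0 then ⊤ else ((p * Real.log (p / q) : ℝ) : EReal)

/-- Binary Kullback–Leibler divergence `d_kl(l ‖ q)` between the two-point
distributions `(l, 1 - l)` and `(q, 1 - q)`. -/
noncomputable def dkl (l q : ℝ) : EReal :=
  klTerm l q + klTerm (1 - l) (1 - q)

/-- Kullback–Leibler divergence `D_KL(μ ‖ p)` between distributions on a finite type. -/
noncomputable def DKL {V : Type*} [Fintype V] (μ p : V → ℝ) : EReal :=
  ∑ x, klTerm (μ x) (p x)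

lemma klTerm_ne_bot (a b : ℝ) : klTerm a b ≠ ⊥ := by
  unfold klTerm; split_ifs with h1 h2
  · simp
  · simp
  · exact EReal.coe_ne_bot _

lemma ereal_sum_ne_bot {α : Type*} (s : Finset α) (f : α → EReal)
    (h : ∀ x ∈ s, f x ≠ ⊥) : ∑ x ∈ s, f x ≠ ⊥ := by
  classical
  induction s using Finset.induction with
  | empty => simp
  | @insert a s ha ih =>
    rw [Finset.sum_insert ha, Ne, EReal.add_eq_bot_iff]
    push_neg
    exact ⟨h a (Finset.mem_insert_self a s), ih fun x hx => h x (Finset.mem_insert_of_mem hx)⟩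

lemma ereal_sum_eq_top {α : Type*} (s : Finset α) (f : α → EReal)
    (hb : ∀ x ∈ s, f x ≠ ⊥) {x₀ : α} (hx₀ : x₀ ∈ s) (ht : f x₀ = ⊤) :
    ∑ x ∈ s, f x = ⊤ := by
  classical
  rw [← Finset.add_sum_erase s f hx₀, ht,
    EReal.top_add_of_ne_bot (ereal_sum_ne_bot _ _ fun x hx => hb x (Finset.mem_of_mem_erase hx))]

lemma real_log_sum {α : Type*} (s : Finset α) (μ p : α → ℝ)
    (hμ : ∀ x ∈ s, 0 ≤ μ x) (hp : ∀ x ∈ s, 0 ≤ p x)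
    (hpos : ∀ x ∈ s, μ x ≠ 0 → p x ≠ 0)
    (hS : 0 < ∑ x ∈ s, μ x) (hT : 0 < ∑ x ∈ s, p x) :
    (∑ x ∈ s, μ x) * log ((∑ x ∈ s, μ x) / (∑ x ∈ s, p x)) ≤
      ∑ x ∈ s, μ x * log (μ x / p x) := by
  set S := ∑ x ∈ s, μ x with hSdef
  set T := ∑ x ∈ s, p x with hTdef
  have key : ∀ x ∈ s, μ x - p x * (S / T) ≤ μ x * (log (μ x / p x) - log (S / T)) := by
    intro x hx
    rcases eq_or_ne (μ x) 0 with h0 | h0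
    · rw [h0]
      simp only [zero_sub, zero_mul]
      have : 0 ≤ p x * (S / T) := mul_nonneg (hp x hx) (div_nonneg hS.le hT.le)
      linarith
    · have hμx : 0 < μ x := lt_of_le_of_ne (hμ x hx) (Ne.symm h0)
      have hpx : 0 < p x := lt_of_le_of_ne (hp x hx) (Ne.symm (hpos x hx h0))
      have harg : 0 < (S / T) / (μ x / p x) :=
        div_pos (div_pos hS hT) (div_pos hμx hpx)
      have hlog := Real.log_le_sub_one_of_pos harg
      rw [Real.log_div (div_pos hS hT).ne' (div_pos hμx hpx).ne'] at hlog
      have heq : (S / T) / (μ x / p x) = (p x * (S / T)) / μ x := by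
        field_simp
      rw [heq] at hlog
      -- hlog : log (S/T) - log (μ x / p x) ≤ (p x * (S/T)) / μ x - 1
      have hmul := mul_le_mul_of_nonneg_left hlog hμx.le
      have hx2 : μ x * (p x * (S / T) / μ x - 1) = p x * (S / T) - μ x := by
        field_simp
      rw [hx2, mul_sub] at hmul
      rw [mul_sub]
      linarith
  have hsum : ∑ x ∈ s, (μ x - p x * (S / T)) ≤
      ∑ x ∈ s, μ x * (log (μ x / p x) - log (S / T)) :=
    Finset.sum_le_sum key
  have h1 : ∑ x ∈ s, (μ x - p x * (S / T)) = 0 := by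
    rw [Finset.sum_sub_distrib, ← Finset.sum_mul, ← hSdef, ← hTdef]
    field_simp
    ring
  have h2 : ∑ x ∈ s, μ x * (log (μ x / p x) - log (S / T)) =
      (∑ x ∈ s, μ x * log (μ x / p x)) - S * log (S / T) := by
    simp only [mul_sub]
    rw [Finset.sum_sub_distrib, ← Finset.sum_mul, ← hSdef]
  rw [h1, h2] at hsum
  linarith

lemma klTerm_eq (l q : ℝ) (hq : q ≠ 0) :
    klTerm l q = ((l * log (l / q) : ℝ) : EReal) := by
  unfold klTerm
  rcases eq_or_ne l 0 with h | h
  · simp [h]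
  · rw [if_neg h, if_neg hq]

lemma ereal_coe_sum {α : Type*} (s : Finset α) (f : α → ℝ) :
    ((∑ x ∈ s, f x : ℝ) : EReal) = ∑ x ∈ s, ((f x : ℝ) : EReal) := by
  classical
  induction s using Finset.induction with
  | empty => simp
  | @insert a s ha ih => rw [Finset.sum_insert ha, Finset.sum_insert ha, EReal.coe_add, ih]

lemma klTerm_sum_le {α : Type*} (s : Finset α) (μ p : α → ℝ)
    (hμ : ∀ x ∈ s, 0 ≤ μ x) (hp : ∀ x ∈ s, 0 ≤ p x) :
    klTerm (∑ x ∈ s, μ x) (∑ x ∈ s, p x) ≤ ∑ x ∈ s, klTerm (μ x) (p x) := by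
  classical
  rcases eq_or_ne (∑ x ∈ s, μ x) 0 with hS | hS
  · have hall : ∀ x ∈ s, μ x = 0 := (Finset.sum_eq_zero_iff_of_nonneg hμ).1 hS
    rw [hS]
    have : ∑ x ∈ s, klTerm (μ x) (p x) = 0 := by
      apply Finset.sum_eq_zero
      intro x hx
      unfold klTerm
      rw [if_pos (hall x hx)]
    rw [this]
    unfold klTerm
    simp
  · have hSpos : 0 < ∑ x ∈ s, μ x := lt_of_le_of_ne (Finset.sum_nonneg hμ) (Ne.symm hS)
    by_cases hbad : ∃ x ∈ s, μ x ≠ 0 ∧ p x = 0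
    · obtain ⟨x₀, hx₀, hμx₀, hpx₀⟩ := hbad
      have : ∑ x ∈ s, klTerm (μ x) (p x) = ⊤ := by
        apply ereal_sum_eq_top s _ (fun x _ => klTerm_ne_bot _ _) hx₀
        unfold klTerm
        rw [if_neg hμx₀, if_pos hpx₀]
      rw [this]; exact le_top
    · push_neg at hbad
      have hpos : ∀ x ∈ s, μ x ≠ 0 → p x ≠ 0 := hbad
      have hT : (∑ x ∈ s, p x) ≠ 0 := by
        intro h0
        have hall : ∀ x ∈ s, p x = 0 := (Finset.sum_eq_zero_iff_of_nonneg hp).1 h0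
        obtain ⟨x, hx, hμx⟩ : ∃ x ∈ s, μ x ≠ 0 := by
          by_contra hc
          push_neg at hc
          exact hS (Finset.sum_eq_zero hc)
        exact hpos x hx hμx (hall x hx)
      have hTpos : 0 < ∑ x ∈ s, p x := lt_of_le_of_ne (Finset.sum_nonneg hp) (Ne.symm hT)
      have hrhs : ∑ x ∈ s, klTerm (μ x) (p x) =
          ((∑ x ∈ s, μ x * log (μ x / p x) : ℝ) : EReal) := by
        rw [ereal_coe_sum]
        apply Finset.sum_congr rfl
        intro x hx
        rcases eq_or_ne (μ x) 0 with h | h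
        · unfold klTerm; rw [if_pos h, h]; simp
        · exact klTerm_eq _ _ (hpos x hx h)
      rw [hrhs, klTerm_eq _ _ hT, EReal.coe_le_coe_iff]
      exact real_log_sum s μ p hμ hp hpos hSpos hTpos

noncomputable def Fkl (t q : ℝ) : ℝ := t * log (t / q) + (1 - t) * log ((1 - t) / (1 - q))

lemma mul_log_div_eq (t s : ℝ) (hs : s ≠ 0) : t * log (t / s) = t * log t - t * log s := by
  rcases eq_or_ne t 0 with h | h
  · simp [h]
  · rw [Real.log_div h hs]; ring

lemma Fkl_eq (t q : ℝ) (hq0 : q ≠ 0) (hq1 : q ≠ 1) :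
    Fkl t q = t * log t - t * log q + ((1 - t) * log (1 - t) - (1 - t) * log (1 - q)) := by
  unfold Fkl
  rw [mul_log_div_eq t q hq0, mul_log_div_eq (1 - t) (1 - q) (by intro h; apply hq1; linarith)]

lemma dkl_eq_coe (l q : ℝ) (hq0 : q ≠ 0) (hq1 : q ≠ 1) :
    dkl l q = ((Fkl l q : ℝ) : EReal) := by
  unfold dkl Fkl
  rw [klTerm_eq l q hq0, klTerm_eq (1 - l) (1 - q) (by intro h; apply hq1; linarith),
    ← EReal.coe_add]

lemma klTerm_self (t : ℝ) : klTerm t t = 0 := by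
  rcases eq_or_ne t 0 with h | h
  · unfold klTerm; rw [if_pos h]
  · rw [klTerm_eq t t h, div_self h, Real.log_one, mul_zero, EReal.coe_zero]

lemma dkl_self (q : ℝ) : dkl q q = 0 := by
  unfold dkl
  rw [klTerm_self, klTerm_self, add_zero]

lemma Fkl_mono_left {q : ℝ} (hq0 : 0 < q) (hq1 : q < 1) {l a : ℝ}
    (hl : q ≤ l) (hla : l ≤ a) (ha : a ≤ 1) : Fkl l q ≤ Fkl a q := by
  set f : ℝ → ℝ :=
    fun t => t * log t - t * log q + ((1 - t) * log (1 - t) - (1 - t) * log (1 - q)) with hf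
  have hFe : ∀ t, Fkl t q = f t := fun t => Fkl_eq t q hq0.ne' hq1.ne
  have hcont : Continuous f := by
    apply Continuous.add
    · exact Real.continuous_mul_log.sub (continuous_id.mul continuous_const)
    · apply Continuous.sub
      · exact Real.continuous_mul_log.comp (continuous_const.sub continuous_id)
      · exact (continuous_const.sub continuous_id).mul continuous_const
  have hderiv : ∀ t ∈ Set.Ioo q 1,
      HasDerivAt f (log t - log q + (log (1 - q) - log (1 - t))) t := by
    intro t ht
    have ht0 : t ≠ 0 := ne_of_gt (lt_trans hq0 ht.1)
    have ht1 : (1 : ℝ) - t ≠ 0 := by have := ht.2; intro h; linarith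
    have h1 : HasDerivAt (fun t : ℝ => t * log t) (log t + 1) t :=
      Real.hasDerivAt_mul_log ht0
    have h2 : HasDerivAt (fun t : ℝ => t * log q) (1 * log q) t :=
      (hasDerivAt_id t).mul_const (log q)
    have h3 : HasDerivAt (fun t : ℝ => (1 - t) * log (1 - t)) ((log (1 - t) + 1) * (-1)) t := by
      have := (Real.hasDerivAt_mul_log ht1).comp t ((hasDerivAt_id t).const_sub 1)
      simpa [Function.comp_def] using this
    have h4 : HasDerivAt (fun t : ℝ => (1 - t) * log (1 - q)) ((-1) * log (1 - q)) t :=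
      ((hasDerivAt_id t).const_sub 1).mul_const (log (1 - q))
    have := (h1.sub h2).add (h3.sub h4)
    exact this.congr_deriv (by ring)
  have hmono : MonotoneOn f (Set.Icc q 1) := by
    apply monotoneOn_of_deriv_nonneg (convex_Icc q 1) hcont.continuousOn
    · rw [interior_Icc]
      intro x hx
      exact ((hderiv x hx).differentiableAt).differentiableWithinAt
    · rw [interior_Icc]
      intro x hx
      rw [(hderiv x hx).deriv]
      have hA : log q ≤ log x := Real.log_le_log hq0 hx.1.le
      have hB : log (1 - x) ≤ log (1 - q) := Real.log_le_log (by linarith [hx.2]) (by linarith [hx.1])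
      linarith
  rw [hFe l, hFe a]
  exact hmono ⟨hl, hla.trans ha⟩ ⟨hl.trans hla, ha⟩ hla

lemma Fkl_anti_right {a b q : ℝ} (hb : 0 < b) (hbq : b ≤ q) (hqa : q ≤ a)
    (ha : a ≤ 1) (hq1 : q < 1) : Fkl a q ≤ Fkl a b := by
  set g : ℝ → ℝ :=
    fun s => a * log a - a * log s + ((1 - a) * log (1 - a) - (1 - a) * log (1 - s)) with hg
  have hcont : ContinuousOn g (Set.Icc b q) := by
    have hsub : Set.Icc b q ⊆ {(0:ℝ)}ᶜ := by
      intro s hs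
      simp only [Set.mem_compl_iff, Set.mem_singleton_iff]
      exact ne_of_gt (lt_of_lt_of_le hb hs.1)
    have hc1 : ContinuousOn (fun s : ℝ => log s) (Set.Icc b q) :=
      Real.continuousOn_log.mono hsub
    have hc2 : ContinuousOn (fun s : ℝ => log (1 - s)) (Set.Icc b q) := by
      apply ContinuousOn.comp Real.continuousOn_log
        (continuous_const.sub continuous_id).continuousOn
      intro s hs
      simp only [Set.mem_compl_iff, Set.mem_singleton_iff]
      have h2 := hs.2
      intro h
      simp only [Pi.sub_apply, id_eq] at h
      linarith
    exact (continuousOn_const.sub (continuousOn_const.mul hc1)).add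
      (continuousOn_const.sub (continuousOn_const.mul hc2))
  have hderiv : ∀ s ∈ Set.Ioo b q, HasDerivAt g (-(a * s⁻¹) + (1 - a) * (1 - s)⁻¹) s := by
    intro s hs
    have hs0 : s ≠ 0 := ne_of_gt (lt_trans hb hs.1)
    have hs1 : (1 : ℝ) - s ≠ 0 := by have := hs.2; intro h; linarith
    have h1 : HasDerivAt (fun s : ℝ => a * log s) (a * s⁻¹) s :=
      (Real.hasDerivAt_log hs0).const_mul a
    have h2 : HasDerivAt (fun s : ℝ => log (1 - s)) ((1 - s)⁻¹ * (-1)) s := by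
      have := (Real.hasDerivAt_log hs1).comp s ((hasDerivAt_id s).const_sub 1)
      simpa [Function.comp_def] using this
    have h3 : HasDerivAt (fun s : ℝ => (1 - a) * log (1 - s)) ((1 - a) * ((1 - s)⁻¹ * (-1))) s :=
      h2.const_mul (1 - a)
    have := ((hasDerivAt_const s (a * log a)).sub h1).add
      ((hasDerivAt_const s ((1 - a) * log (1 - a))).sub h3)
    exact this.congr_deriv (by ring)
  have hanti : AntitoneOn g (Set.Icc b q) := by
    apply antitoneOn_of_deriv_nonpos (convex_Icc b q) hcont
    · rw [interior_Icc]
      intro x hx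
      exact ((hderiv x hx).differentiableAt).differentiableWithinAt
    · rw [interior_Icc]
      intro x hx
      rw [(hderiv x hx).deriv]
      have hx0 : 0 < x := lt_trans hb hx.1
      have hx1 : 0 < 1 - x := by have := hx.2; linarith
      have hxa : x ≤ a := le_of_lt (lt_of_lt_of_le hx.2 hqa)
      have key : (1 - a) * (1 - x)⁻¹ ≤ a * x⁻¹ := by
        rw [mul_inv_le_iff₀ hx1]
        have h2 : (1 - a) * x ≤ a * (1 - x) := by nlinarith
        calc (1 - a) = ((1 - a) * x) * x⁻¹ := by field_simp
          _ ≤ (a * (1 - x)) * x⁻¹ := by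
              apply mul_le_mul_of_nonneg_right h2 (inv_nonneg.2 hx0.le)
          _ = a * x⁻¹ * (1 - x) := by ring
      linarith
  have e1 : Fkl a q = g q := Fkl_eq a q (lt_of_lt_of_le hb hbq).ne' hq1.ne
  have e2 : Fkl a b = g b := Fkl_eq a b hb.ne' (by intro h; rw [h] at hbq; linarith)
  rw [e1, e2]
  exact hanti ⟨le_refl b, hbq⟩ ⟨hbq, le_refl q⟩ hbq

lemma DKL_nonneg {V : Type*} [Fintype V] (μ p : V → ℝ)
    (hμ0 : ∀ x, 0 ≤ μ x) (hp0 : ∀ x, 0 ≤ p x)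
    (hμsum : ∑ x, μ x = 1) (hpsum : ∑ x, p x = 1) : 0 ≤ DKL μ p := by
  have h := klTerm_sum_le Finset.univ μ p (fun x _ => hμ0 x) (fun x _ => hp0 x)
  rw [hμsum, hpsum, klTerm_self] at h
  exact h

lemma dkl_le_DKL {V : Type*} [Fintype V] (μ p : V → ℝ)
    (hμ0 : ∀ x, 0 ≤ μ x) (hp0 : ∀ x, 0 ≤ p x)
    (hμsum : ∑ x, μ x = 1) (hpsum : ∑ x, p x = 1) (A : Finset V) :
    dkl (∑ x ∈ A, μ x) (∑ x ∈ A, p x) ≤ DKL μ p := by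
  classical
  have h1 := klTerm_sum_le A μ p (fun x _ => hμ0 x) (fun x _ => hp0 x)
  have h2 := klTerm_sum_le Aᶜ μ p (fun x _ => hμ0 x) (fun x _ => hp0 x)
  have e1 : ∑ x ∈ Aᶜ, μ x = 1 - ∑ x ∈ A, μ x := by
    have := Finset.sum_add_sum_compl A μ
    rw [hμsum] at this
    linarith
  have e2 : ∑ x ∈ Aᶜ, p x = 1 - ∑ x ∈ A, p x := by
    have := Finset.sum_add_sum_compl A p
    rw [hpsum] at this
    linarith
  rw [e1, e2] at h2
  unfold dkl DKL
  rw [← Finset.sum_add_sum_compl A (fun x => klTerm (μ x) (p x))]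
  exact add_le_add h1 h2

/-- capacity bound. For probability distributions `p, μ` on a finite
nonempty set `V`, with `x*` attaining the maximum of `p` and `q := 1 - p x*`, for
every `A ⊆ V` one has `μ(A) - p(A) ≤ sup {λ ∈ [0,1] : d_kl(λ‖q) ≤ D_KL(μ‖p)}`. -/
theorem capacity_bound {V : Type*} [Fintype V] [Nonempty V]
    (p μ : V → ℝ)
    (hp0 : ∀ x, 0 ≤ p x) (hp1 : ∀ x, p x ≤ 1) (hpsum : ∑ x, p x = 1)
    (hμ0 : ∀ x, 0 ≤ μ x) (hμ1 : ∀ x, μ x ≤ 1) (hμsum : ∑ x, μ x = 1)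
    (xstar : V) (hxstar : ∀ x, p x ≤ p xstar)
    (A : Finset V) :
    (∑ x ∈ A, μ x) - (∑ x ∈ A, p x) ≤
      sSup {l : ℝ | l ∈ Set.Icc (0 : ℝ) 1 ∧ dkl l (1 - p xstar) ≤ DKL μ p} := by
  classical
  set q : ℝ := 1 - p xstar with hqdef
  set a : ℝ := ∑ x ∈ A, μ x with hadef
  set b : ℝ := ∑ x ∈ A, p x with hbdef
  set S : Set ℝ := {l : ℝ | l ∈ Set.Icc (0 : ℝ) 1 ∧ dkl l q ≤ DKL μ p} with hSdef
  have hpx_pos : 0 < p xstar := by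
    by_contra h
    push_neg at h
    have : ∑ x, p x ≤ 0 := Finset.sum_nonpos fun x _ => (hxstar x).trans h
    linarith
  have hq0 : 0 ≤ q := by
    have := hp1 xstar
    rw [hqdef]
    linarith
  have hq1 : q < 1 := by
    rw [hqdef]
    linarith
  have hbdd : BddAbove S := ⟨1, fun l hl => hl.1.2⟩
  have hqS : q ∈ S := by
    refine ⟨⟨hq0, hq1.le⟩, ?_⟩
    rw [dkl_self]
    exact DKL_nonneg μ p hμ0 hp0 hμsum hpsum
  have ha0 : 0 ≤ a := Finset.sum_nonneg fun x _ => hμ0 x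
  have hb0 : 0 ≤ b := Finset.sum_nonneg fun x _ => hp0 x
  have ha1 : a ≤ 1 := by
    rw [hadef, ← hμsum]
    exact Finset.sum_le_sum_of_subset_of_nonneg (Finset.subset_univ A)
      fun x _ _ => hμ0 x
  rcases le_or_gt (a - b) q with hcase | hcase
  · exact hcase.trans (le_csSup hbdd hqS)
  · have hxA : xstar ∉ A := by
      intro hx
      have hb_ge : p xstar ≤ b := Finset.single_le_sum (fun x _ => hp0 x) hx
      rw [hqdef] at hcase
      linarith
    have hbq : b ≤ q := by
      have hins : ∑ x ∈ insert xstar A, p x ≤ ∑ x, p x :=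
        Finset.sum_le_sum_of_subset_of_nonneg (Finset.subset_univ _) fun x _ _ => hp0 x
      rw [Finset.sum_insert hxA, hpsum, ← hbdef] at hins
      rw [hqdef]
      linarith
    have hlam0 : 0 ≤ a - b := le_trans hq0 hcase.le
    have hlam1 : a - b ≤ 1 := by linarith
    have hdp : dkl a b ≤ DKL μ p := dkl_le_DKL μ p hμ0 hp0 hμsum hpsum A
    have hmem : a - b ∈ S := by
      refine ⟨⟨hlam0, hlam1⟩, ?_⟩
      rcases eq_or_ne b 0 with hb | hb
      · have hapos : a ≠ 0 := by
          intro h0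
          rw [h0, hb] at hcase
          simp at hcase
          linarith
        have htop : dkl a b = ⊤ := by
          have h1 : klTerm a b = ⊤ := by
            unfold klTerm
            rw [if_neg hapos, if_pos hb]
          unfold dkl
          rw [h1, EReal.top_add_of_ne_bot (klTerm_ne_bot _ _)]
        have hDtop : DKL μ p = ⊤ := top_le_iff.1 (htop ▸ hdp)
        rw [hDtop]
        exact le_top
      · have hbpos : 0 < b := lt_of_le_of_ne hb0 (Ne.symm hb)
        have hq0' : 0 < q := lt_of_lt_of_le hbpos hbq
        have hqa : q ≤ a := by linarith
        have e2 : dkl a b = ((Fkl a b : ℝ) : EReal) :=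
          dkl_eq_coe _ _ hbpos.ne' (by intro h; rw [h] at hbq; linarith)
        rw [dkl_eq_coe _ _ hq0'.ne' hq1.ne]
        calc ((Fkl (a - b) q : ℝ) : EReal)
            ≤ ((Fkl a q : ℝ) : EReal) :=
              EReal.coe_le_coe_iff.2 (Fkl_mono_left hq0' hq1 hcase.le (by linarith) ha1)
          _ ≤ ((Fkl a b : ℝ) : EReal) :=
              EReal.coe_le_coe_iff.2 (Fkl_anti_right hbpos hbq hqa ha1 hq1)
          _ ≤ DKL μ p := e2 ▸ hdp
    exact le_csSup hbdd hmem
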